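/- For a Randers norm F = α + β on ℝⁿ with ‖β‖_α < 1, the dual norm F* = α* + β* satisfies ‖β*‖_{α*} = ‖β‖_α, where ‖β*‖_{α*} = √(a_{*ij} b*^i b*^j) and (a_{*ij}) is the inverse of (a*^{ij}). -/

import Mathlib

open Matrix

lemma vmv_mulVec {n : ℕ} (v w x : Fin n → ℝ) :
    vecMulVec v w *ᵥ x = (w ⬝ᵥ x) • v := by
  ext i
  simp [mulVec, vecMulVec_apply, dotProduct, Finset.mul_sum, mul_comm, mul_assoc, mul_left_comm]

lemma mul_vmv {n : ℕ} (M : Matrix (Fin n) (Fin n) ℝ) (v w : Fin n → ℝ) :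
    M * vecMulVec v w = vecMulVec (M *ᵥ v) w := by
  ext i j
  simp [Matrix.mul_apply, vecMulVec_apply, mulVec, dotProduct, Finset.sum_mul, mul_assoc]

lemma vmv_mul {n : ℕ} (M : Matrix (Fin n) (Fin n) ℝ) (v w : Fin n → ℝ) :
    vecMulVec v w * M = vecMulVec v (w ᵥ* M) := by
  ext i j
  simp [Matrix.mul_apply, vecMulVec_apply, vecMul, dotProduct, Finset.mul_sum, mul_assoc]

lemma vmv_smul_left {n : ℕ} (c : ℝ) (v w : Fin n → ℝ) :
    vecMulVec (c • v) w = c • vecMulVec v w := by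
  ext i j
  simp [vecMulVec_apply, mul_assoc]

theorem stmt_8 {n : ℕ} (a : Matrix (Fin n) (Fin n) ℝ) (ha : a.PosDef) (b : Fin n → ℝ)
    (b2 : ℝ) (hb2 : b2 = b ⬝ᵥ (a⁻¹ *ᵥ b)) (hb : b2 < 1)
    (astar : Matrix (Fin n) (Fin n) ℝ)
    (hastar : astar = ((1 - b2) ^ 2)⁻¹ • ((1 - b2) • a⁻¹ + vecMulVec (a⁻¹ *ᵥ b) (a⁻¹ *ᵥ b)))
    (bstar : Fin n → ℝ) (hbstar : bstar = -(1 - b2)⁻¹ • (a⁻¹ *ᵥ b)) :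
    Real.sqrt (bstar ⬝ᵥ (astar⁻¹ *ᵥ bstar)) = Real.sqrt b2 := by
  set v : Fin n → ℝ := a⁻¹ *ᵥ b with hv
  have hd : (1 : ℝ) - b2 ≠ 0 := by linarith
  have hdet : IsUnit a.det := isUnit_iff_ne_zero.mpr ha.det_pos.ne'
  have hAa : a⁻¹ * a = 1 := a.nonsing_inv_mul hdet
  have hav : a *ᵥ v = b := by
    rw [hv, mulVec_mulVec, a.mul_nonsing_inv hdet, one_mulVec]
  have hsym : aᵀ = a := by
    have := ha.isHermitian
    simpa [Matrix.IsHermitian, Matrix.conjTranspose_eq_transpose_of_trivial] using this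
  have hva : v ᵥ* a = b := by
    rw [← hsym, vecMul_transpose, hav]
  have hvb : v ⬝ᵥ b = b2 := by rw [hb2, dotProduct_comm]
  have hbv : b ⬝ᵥ v = b2 := hb2.symm
  have expand : ((1 - b2) • a⁻¹ + vecMulVec v v) * (a - vecMulVec b b)
      = (1 - b2) • (1 : Matrix (Fin n) (Fin n) ℝ) := by
    rw [add_mul, Matrix.mul_sub, Matrix.mul_sub, Matrix.smul_mul, Matrix.smul_mul, hAa,
      mul_vmv, vmv_mul, hva, mul_vmv, vmv_mulVec, hvb, vmv_smul_left]
    module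
  have hM : astar * ((1 - b2) • (a - vecMulVec b b)) = 1 := by
    rw [hastar, Matrix.smul_mul, Matrix.mul_smul, expand, smul_smul, smul_smul]
    rw [show ((1 - b2) ^ 2)⁻¹ * (1 - b2) * (1 - b2) = 1 from by field_simp, one_smul]
  have hinv : astar⁻¹ = (1 - b2) • (a - vecMulVec b b) := inv_eq_right_inv hM
  rw [hinv, hbstar]
  congr 1
  rw [smul_mulVec, mulVec_smul, sub_mulVec, vmv_mulVec, hav, hbv]
  simp only [smul_dotProduct, dotProduct_smul, dotProduct_sub, dotProduct_smul, hvb, smul_eq_mul]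
  field_simp
  ring
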